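/- Let N ≥ 1 and let p > 1 be a real number. Let u : ℝ^N → ℝ be a C³, ℤ^N-periodic admissible function satisfying det A[u](x) = (1 + ‖∇u(x)‖²)^p for all x ∈ ℝ^N. Then u is constant. -/

import Mathlib

open Matrix Real

/-- The `i`-th partial derivative (gradient component) of `u` at `x`. -/
noncomputable def grad {N : ℕ} (u : (Fin N → ℝ) → ℝ) (x : Fin N → ℝ) (i : Fin N) : ℝ :=
  fderiv ℝ u x (Pi.single i 1)

/-- The `(i,j)` entry of the Hessian matrix of `u` at `x`. -/
noncomputable def hess {N : ℕ} (u : (Fin N → ℝ) → ℝ) (x : Fin N → ℝ) (i j : Fin N) : ℝ :=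
  fderiv ℝ (fun y => fderiv ℝ u y (Pi.single j 1)) x (Pi.single i 1)

/-- The squared norm of the gradient of `u` at `x`. -/
noncomputable def gradSq {N : ℕ} (u : (Fin N → ℝ) → ℝ) (x : Fin N → ℝ) : ℝ :=
  ∑ i, (grad u x i) ^ 2

/-- The Laplacian of `u` at `x` (trace of the Hessian). -/
noncomputable def lap {N : ℕ} (u : (Fin N → ℝ) → ℝ) (x : Fin N → ℝ) : ℝ :=
  ∑ i, hess u x i i

/-- The matrix `A[u](x) = I + ∇u(x) (∇u(x))ᵀ − Hess u(x)`. -/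
noncomputable def amat {N : ℕ} (u : (Fin N → ℝ) → ℝ) (x : Fin N → ℝ) :
    Matrix (Fin N) (Fin N) ℝ :=
  1 + Matrix.of (fun i j => grad u x i * grad u x j) - Matrix.of (fun i j => hess u x i j)

/-- `u` is `ℤ^N`-periodic. -/
def ZPeriodic {N : ℕ} (u : (Fin N → ℝ) → ℝ) : Prop :=
  ∀ (x : Fin N → ℝ) (k : Fin N → ℤ), u (x + fun i => (k i : ℝ)) = u x

/-- `u` is admissible: `A[u](x)` is positive definite for every `x`. -/
def Admissible {N : ℕ} (u : (Fin N → ℝ) → ℝ) : Prop :=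
  ∀ x, (amat u x).PosDef



lemma sum_single_smul {N : ℕ} (v : Fin N → ℝ) : ∑ i, v i • (Pi.single i 1 : Fin N → ℝ) = v := by
  funext j
  rw [Finset.sum_apply]
  simp only [Pi.smul_apply, Pi.single_apply, smul_eq_mul]
  simp [Finset.sum_ite_eq' Finset.univ j]

lemma clm_apply_eq_sum {N : ℕ} (L : (Fin N → ℝ) →L[ℝ] ℝ) (v : Fin N → ℝ) :
    L v = ∑ i, v i * L (Pi.single i 1) := by
  conv_lhs => rw [← sum_single_smul v]
  rw [map_sum]
  simp

lemma line_hasDerivAt {N : ℕ} {f : (Fin N → ℝ) → ℝ} (hf : Differentiable ℝ f)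
    (x v : Fin N → ℝ) (t : ℝ) :
    HasDerivAt (fun s => f (x + s • v)) (∑ i, v i * fderiv ℝ f (x + t • v) (Pi.single i 1)) t := by
  have hc : HasDerivAt (fun s : ℝ => x + s • v) v t := by
    simpa using ((hasDerivAt_id t).smul_const v).const_add x
  have := (hf (x + t • v)).hasFDerivAt.comp_hasDerivAt t hc
  rwa [← clm_apply_eq_sum]

lemma fderiv_apply_const {N : ℕ} {c : (Fin N → ℝ) → ((Fin N → ℝ) →L[ℝ] ℝ)} {x : Fin N → ℝ}
    (hc : DifferentiableAt ℝ c x) (v w : Fin N → ℝ) :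
    fderiv ℝ (fun y => c y v) x w = fderiv ℝ c x w v := by
  rw [fderiv_clm_apply hc (differentiableAt_const v)]
  simp

lemma second_deriv_nonpos_at_max {q Q1 : ℝ → ℝ} {q2 : ℝ}
    (hq : ∀ t, HasDerivAt q (Q1 t) t) (hQ : HasDerivAt Q1 q2 0)
    (hmax : ∀ t, q t ≤ q 0) : q2 ≤ 0 := by
  have hQ10 : Q1 0 = 0 := by
    have hlm : IsLocalMax q 0 := Filter.Eventually.of_forall hmax
    have := hlm.deriv_eq_zero
    rwa [(hq 0).deriv] at this
  by_contra hpos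
  push_neg at hpos
  have hslope : Filter.Tendsto (slope Q1 0) (nhdsWithin 0 {0}ᶜ) (nhds q2) :=
    hasDerivAt_iff_tendsto_slope.mp hQ
  have hev : ∀ᶠ t in nhdsWithin 0 {0}ᶜ, 0 < slope Q1 0 t :=
    hslope.eventually (eventually_gt_nhds hpos)
  have hev' : ∀ᶠ t in nhdsWithin 0 (Set.Ioi 0), 0 < slope Q1 0 t :=
    hev.filter_mono (nhdsWithin_mono 0 (fun t ht => ne_of_gt ht))
  obtain ⟨δ, hδ, hsub⟩ := mem_nhdsGT_iff_exists_Ioo_subset.mp hev'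
  have hδ0 : (0:ℝ) < δ := hδ
  have hQpos : ∀ t ∈ Set.Ioo (0:ℝ) δ, 0 < Q1 t := by
    intro t ht
    have := hsub ht
    simp only [Set.mem_setOf_eq, slope_def_field] at this
    have h2 : 0 < (Q1 t - Q1 0) / (t - 0) := this
    rw [hQ10, sub_zero, sub_zero] at h2
    have := mul_pos h2 ht.1
    rwa [div_mul_cancel₀] at this
    exact ne_of_gt ht.1
  have hmono : StrictMonoOn q (Set.Icc 0 δ) := by
    apply strictMonoOn_of_deriv_pos (convex_Icc 0 δ)
    · exact (fun t _ => ((hq t).differentiableAt.continuousAt.continuousWithinAt))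
    · intro t ht
      rw [interior_Icc] at ht
      rw [(hq t).deriv]
      exact hQpos t ht
  have : q 0 < q δ := hmono ⟨le_refl _, le_of_lt hδ0⟩ ⟨le_of_lt hδ0, le_refl _⟩ hδ0
  exact absurd (hmax δ) (not_le.mpr this)


lemma det_hasDerivAt {n : ℕ} {M : ℝ → Matrix (Fin n) (Fin n) ℝ} {M' : Matrix (Fin n) (Fin n) ℝ}
    {t : ℝ} (h : ∀ i j, HasDerivAt (fun s => M s i j) (M' i j) t) :
    HasDerivAt (fun s => (M s).det)
      (∑ i, ∑ j, (M t).adjugate i j * M' j i) t := by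
  have key : HasDerivAt (fun s => (M s).det)
      (∑ σ : Equiv.Perm (Fin n), (Equiv.Perm.sign σ : ℝ) *
        ∑ k, (∏ j ∈ Finset.univ.erase k, M t (σ j) j) • M' (σ k) k) t := by
    simp only [Matrix.det_apply']
    apply HasDerivAt.fun_sum
    intro σ _
    exact (HasDerivAt.fun_finsetProd (fun i _ => h (σ i) i)).const_mul _
  convert key using 1
  -- identify the derivative with the adjugate formula
  have step1 : ∀ k : Fin n,
      (∑ i, (M t).adjugate k i * M' i k) =
      ∑ σ : Equiv.Perm (Fin n), (Equiv.Perm.sign σ : ℝ) *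
        ((∏ j ∈ Finset.univ.erase k, M t (σ j) j) * M' (σ k) k) := by
    intro k
    have h1 : (∑ i, (M t).adjugate k i * M' i k) = ((M t).adjugate *ᵥ (fun r => M' r k)) k := by
      simp [Matrix.mulVec, dotProduct]
    rw [h1, ← Matrix.cramer_eq_adjugate_mulVec, Matrix.cramer_apply, Matrix.det_apply']
    apply Finset.sum_congr rfl
    intro σ _
    rw [← Finset.mul_prod_erase Finset.univ _ (Finset.mem_univ k)]
    have hhead : ((M t).updateCol k fun r => M' r k) (σ k) k = M' (σ k) k := by
      rw [Matrix.updateCol_apply, if_pos rfl]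
    have htail : ∀ j ∈ Finset.univ.erase k, ((M t).updateCol k fun r => M' r k) (σ j) j = M t (σ j) j := by
      intro j hj
      rw [Matrix.updateCol_apply, if_neg (Finset.ne_of_mem_erase hj)]
    rw [hhead, Finset.prod_congr rfl htail]
    ring
  calc ∑ i, ∑ j, (M t).adjugate i j * M' j i
      = ∑ k : Fin n, ∑ σ : Equiv.Perm (Fin n), (Equiv.Perm.sign σ : ℝ) *
        ((∏ j ∈ Finset.univ.erase k, M t (σ j) j) * M' (σ k) k) := by
        exact Finset.sum_congr rfl (fun k _ => step1 k)
    _ = ∑ σ : Equiv.Perm (Fin n), (Equiv.Perm.sign σ : ℝ) *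
        ∑ k, (∏ j ∈ Finset.univ.erase k, M t (σ j) j) • M' (σ k) k := by
        rw [Finset.sum_comm]
        apply Finset.sum_congr rfl
        intro σ _
        rw [Finset.mul_sum]
        apply Finset.sum_congr rfl
        intro k _
        rw [smul_eq_mul]

section smooth
variable {N : ℕ} {u : (Fin N → ℝ) → ℝ}

lemma grad_contDiff (hu : ContDiff ℝ 3 u) (i : Fin N) : ContDiff ℝ 2 (fun x => grad u x i) := by
  exact (hu.fderiv_right (by norm_num)).clm_apply contDiff_const

lemma hess_contDiff (hu : ContDiff ℝ 3 u) (i j : Fin N) : ContDiff ℝ 1 (fun x => hess u x i j) := by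
  have h := ((grad_contDiff hu j).fderiv_right (m := 1) (by norm_num)).clm_apply
    (contDiff_const (c := (Pi.single i 1 : Fin N → ℝ)))
  exact h

lemma hess_symm (hu : ContDiff ℝ 3 u) (x : Fin N → ℝ) (i j : Fin N) : hess u x i j = hess u x j i := by
  have hd2 : ContDiff ℝ 2 (fderiv ℝ u) := hu.fderiv_right (by norm_num)
  have hx : HasFDerivAt (fderiv ℝ u) (fderiv ℝ (fderiv ℝ u) x) x :=
    ((hd2.differentiable (by norm_num)) x).hasFDerivAt
  have hf : ∀ᶠ y in nhds x, HasFDerivAt u (fderiv ℝ u y) y :=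
    Filter.Eventually.of_forall (fun y => ((hu.differentiable (by norm_num)) y).hasFDerivAt)
  have hsym := second_derivative_symmetric_of_eventually_of_real hf hx
  have e1 : hess u x i j = fderiv ℝ (fderiv ℝ u) x (Pi.single i 1) (Pi.single j 1) :=
    fderiv_apply_const ((hd2.differentiable (by norm_num)) x) _ _
  have e2 : hess u x j i = fderiv ℝ (fderiv ℝ u) x (Pi.single j 1) (Pi.single i 1) :=
    fderiv_apply_const ((hd2.differentiable (by norm_num)) x) _ _
  rw [e1, e2, hsym]

-- symmetry of third derivative in the two outer indices
lemma third_symm (hu : ContDiff ℝ 3 u) (x : Fin N → ℝ) (a b c : Fin N) :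
    fderiv ℝ (fun y => hess u y b c) x (Pi.single a 1) =
    fderiv ℝ (fun y => hess u y a c) x (Pi.single b 1) := by
  have hφ : ContDiff ℝ 2 (fun y => grad u y c) := grad_contDiff hu c
  have hd2 : ContDiff ℝ 1 (fderiv ℝ (fun y => grad u y c)) := hφ.fderiv_right (by norm_num)
  have hx : HasFDerivAt (fderiv ℝ (fun y => grad u y c))
      (fderiv ℝ (fderiv ℝ (fun y => grad u y c)) x) x :=
    ((hd2.differentiable (by norm_num)) x).hasFDerivAt
  have hf : ∀ᶠ y in nhds x, HasFDerivAt (fun y => grad u y c)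
      (fderiv ℝ (fun y => grad u y c) y) y :=
    Filter.Eventually.of_forall (fun y => ((hφ.differentiable (by norm_num)) y).hasFDerivAt)
  have hsym := second_derivative_symmetric_of_eventually_of_real hf hx
  have e1 : ∀ a' b' : Fin N, fderiv ℝ (fun y => hess u y a' c) x (Pi.single b' 1) =
      fderiv ℝ (fderiv ℝ (fun y => grad u y c)) x (Pi.single b' 1) (Pi.single a' 1) := by
    intro a' b'
    have : (fun y => hess u y a' c) = (fun y => fderiv ℝ (fun z => grad u z c) y (Pi.single a' 1)) := by
      funext y; rfl
    rw [this]
    exact fderiv_apply_const ((hd2.differentiable (by norm_num)) x) _ _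
  rw [e1, e1, hsym]

-- switching the two inner (hessian) indices
lemma third_symm' (hu : ContDiff ℝ 3 u) (x : Fin N → ℝ) (a b c : Fin N) :
    fderiv ℝ (fun y => hess u y b c) x (Pi.single a 1) =
    fderiv ℝ (fun y => hess u y c b) x (Pi.single a 1) := by
  have : (fun y => hess u y b c) = (fun y => hess u y c b) := by
    funext y; exact hess_symm hu y b c
  rw [this]

end smooth

lemma fderiv_periodic {N : ℕ} {u : (Fin N → ℝ) → ℝ} (hud : Differentiable ℝ u)
    (hper : ZPeriodic u) (x : Fin N → ℝ) (k : Fin N → ℤ) :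
    fderiv ℝ u (x + fun i => (k i : ℝ)) = fderiv ℝ u x := by
  set c : Fin N → ℝ := fun i => (k i : ℝ)
  have hτ : HasFDerivAt (fun y : Fin N → ℝ => y + c)
      (ContinuousLinearMap.id ℝ (Fin N → ℝ)) x := (hasFDerivAt_id x).add_const c
  have hcomp : HasFDerivAt (fun y => u (y + c))
      ((fderiv ℝ u (x + c)).comp (ContinuousLinearMap.id ℝ (Fin N → ℝ))) x :=
    (hud (x + c)).hasFDerivAt.comp x hτ
  have hfun : (fun y => u (y + c)) = u := by
    funext y; exact hper y k
  rw [hfun, ContinuousLinearMap.comp_id] at hcomp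
  exact hcomp.fderiv.symm

lemma gradSq_exists_max {N : ℕ} {u : (Fin N → ℝ) → ℝ} (hu : ContDiff ℝ 3 u)
    (hper : ZPeriodic u) : ∃ x₀, ∀ x, gradSq u x ≤ gradSq u x₀ := by
  have hc : Continuous (gradSq u) := by
    apply continuous_finset_sum
    intro i _
    exact ((grad_contDiff hu i).continuous).pow 2
  have hK : IsCompact (Set.Icc (0 : Fin N → ℝ) 1) := isCompact_Icc
  obtain ⟨x₀, _, hmax⟩ := hK.exists_isMaxOn ⟨0, Set.mem_Icc.mpr ⟨le_refl _, zero_le_one⟩⟩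
    hc.continuousOn
  refine ⟨x₀, fun x => ?_⟩
  set k : Fin N → ℤ := fun i => -⌊x i⌋
  have hxy : gradSq u (x + fun i => (k i : ℝ)) = gradSq u x := by
    unfold gradSq grad
    rw [fderiv_periodic (hu.differentiable (by norm_num)) hper x k]
  have hmem : (x + fun i => (k i : ℝ)) ∈ Set.Icc (0 : Fin N → ℝ) 1 := by
    constructor
    · intro i
      simp only [Pi.add_apply, Pi.zero_apply, k]
      push_cast
      have := Int.fract_nonneg (x i)
      rw [Int.fract] at this
      linarith
    · intro i
      simp only [Pi.add_apply, Pi.one_apply, k]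
      push_cast
      have := Int.fract_lt_one (x i)
      rw [Int.fract] at this
      linarith
  calc gradSq u x = gradSq u (x + fun i => (k i : ℝ)) := hxy.symm
    _ ≤ gradSq u x₀ := hmax hmem

lemma sum_rotate {ι : Type*} [Fintype ι] (f : ι → ι → ι → ℝ) :
    ∑ i, ∑ k, ∑ a, f i k a = ∑ k, ∑ a, ∑ i, f i k a := by
  rw [Finset.sum_comm]
  exact Finset.sum_congr rfl (fun k _ => by rw [Finset.sum_comm])

lemma trace_form {N : ℕ} (B : Matrix (Fin N) (Fin N) ℝ) (F : Fin N → Fin N → ℝ) :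
    ∑ i, ∑ j, B i j * (∑ m, F j m * F i m)
      = ∑ m, (fun k => F k m) ⬝ᵥ (B *ᵥ (fun k => F k m)) := by
  have e1 : ∀ i j : Fin N, B i j * (∑ m, F j m * F i m) = ∑ m, B i j * (F j m * F i m) :=
    fun i j => Finset.mul_sum _ _ _
  calc ∑ i, ∑ j, B i j * (∑ m, F j m * F i m)
      = ∑ i, ∑ j, ∑ m, B i j * (F j m * F i m) := by
        apply Finset.sum_congr rfl; intro i _
        apply Finset.sum_congr rfl; intro j _
        exact e1 i j
    _ = ∑ j, ∑ m, ∑ i, B i j * (F j m * F i m) := sum_rotate _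
    _ = ∑ m, ∑ i, ∑ j, B i j * (F j m * F i m) := sum_rotate _
    _ = ∑ m, (fun k => F k m) ⬝ᵥ (B *ᵥ (fun k => F k m)) := by
        apply Finset.sum_congr rfl; intro m _
        simp only [dotProduct, Matrix.mulVec]
        apply Finset.sum_congr rfl; intro i _
        rw [Finset.mul_sum]
        apply Finset.sum_congr rfl; intro j _
        ring

/-- Rigidity: a periodic admissible solution of `det A[u] = (1 + ‖∇u‖²)^p` with `p > 1`
is constant. -/
theorem stmt10 {N : ℕ} (hN : 1 ≤ N) (p : ℝ) (hp : 1 < p)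
    (u : (Fin N → ℝ) → ℝ) (hu : ContDiff ℝ 3 u) (hper : ZPeriodic u)
    (hadm : Admissible u)
    (heq : ∀ x, (amat u x).det = (1 + gradSq u x) ^ p) :
    ∀ x y, u x = u y := by
  have hud : Differentiable ℝ u := hu.differentiable (by norm_num)
  have hφd : ∀ i, Differentiable ℝ (fun x => grad u x i) :=
    fun i => (grad_contDiff hu i).differentiable (by norm_num)
  have hψd : ∀ i j, Differentiable ℝ (fun x => hess u x i j) :=
    fun i j => (hess_contDiff hu i j).differentiable (by norm_num)
  obtain ⟨x₀, hmax⟩ := gradSq_exists_max hu hper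
  set g : Fin N → ℝ := fun i => grad u x₀ i with hg
  -- line derivatives
  have hlineφ : ∀ (i : Fin N) (x v : Fin N → ℝ) (t : ℝ),
      HasDerivAt (fun s => grad u (x + s • v) i)
        (∑ k, v k * hess u (x + t • v) k i) t :=
    fun i x v t => line_hasDerivAt (hφd i) x v t
  have hlineψ : ∀ (i j : Fin N) (x v : Fin N → ℝ) (t : ℝ),
      HasDerivAt (fun s => hess u (x + s • v) i j)
        (∑ k, v k * fderiv ℝ (fun y => hess u y i j) (x + t • v) (Pi.single k 1)) t :=
    fun i j x v t => line_hasDerivAt (hψd i j) x v t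
  have h0 : ∀ v : Fin N → ℝ, x₀ + (0:ℝ) • v = x₀ := by
    intro v
    rw [zero_smul, add_zero]
  -- derivative of gradSq along lines
  have hq : ∀ (v : Fin N → ℝ) (t : ℝ), HasDerivAt (fun s => gradSq u (x₀ + s • v))
      (∑ i, 2 * grad u (x₀ + t • v) i * ∑ k, v k * hess u (x₀ + t • v) k i) t := by
    intro v t
    have h1 : HasDerivAt (fun s => ∑ i, (grad u (x₀ + s • v) i) ^ 2)
        (∑ i, ((2:ℕ):ℝ) * (grad u (x₀ + t • v) i) ^ (2-1) * ∑ k, v k * hess u (x₀ + t • v) k i) t :=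
      HasDerivAt.fun_sum (fun i _ => (hlineφ i x₀ v t).pow 2)
    have h2 : (fun s : ℝ => ∑ i, (grad u (x₀ + s • v) i) ^ 2) = fun s : ℝ => gradSq u (x₀ + s • v) := by
      funext s; rfl
    rw [h2] at h1
    convert h1 using 1
    apply Finset.sum_congr rfl
    intro i _
    norm_num
  -- first order condition
  have hfo : ∀ v : Fin N → ℝ, ∑ i, 2 * g i * ∑ k, v k * hess u x₀ k i = 0 := by
    intro v
    have hqle : ∀ t : ℝ, gradSq u (x₀ + t • v) ≤ gradSq u (x₀ + (0:ℝ) • v) := by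
      intro t; rw [h0 v]; exact hmax _
    have hloc : IsLocalMax (fun s : ℝ => gradSq u (x₀ + s • v)) 0 :=
      Filter.Eventually.of_forall hqle
    have hz := hloc.deriv_eq_zero
    rw [(hq v 0).deriv] at hz
    rw [h0 v] at hz
    exact hz
  have hfoj : ∀ j, ∑ i, g i * hess u x₀ j i = 0 := by
    intro j
    have h := hfo (Pi.single j 1)
    have hinner : ∀ i, (∑ k, (Pi.single j 1 : Fin N → ℝ) k * hess u x₀ k i) = hess u x₀ j i := by
      intro i
      rw [Finset.sum_eq_single j]
      · simp
      · intro b _ hb; simp [Pi.single_apply, hb]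
      · intro hj; exact absurd (Finset.mem_univ j) hj
    rw [Finset.sum_congr rfl (fun i _ => by rw [hinner i])] at h
    have h2 : (2:ℝ) * ∑ i, g i * hess u x₀ j i = 0 := by
      rw [Finset.mul_sum]; rw [← h]
      exact Finset.sum_congr rfl (fun i _ => by ring)
    linarith
  have hs : ∀ i, ∑ k, g k * hess u x₀ k i = 0 := by
    intro i
    have : ∑ k, g k * hess u x₀ k i = ∑ k, g k * hess u x₀ i k :=
      Finset.sum_congr rfl (fun k _ => by rw [hess_symm hu x₀ k i])
    rw [this]
    exact hfoj i
  -- third derivative tensor at x₀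
  set T : Fin N → Fin N → Fin N → ℝ :=
    fun a b c => fderiv ℝ (fun y => hess u y b c) x₀ (Pi.single a 1) with hT
  have hT12 : ∀ a b c, T a b c = T b a c := fun a b c => third_symm hu x₀ a b c
  have hT23 : ∀ a b c, T a b c = T a c b := fun a b c => third_symm' hu x₀ a b c
  have hT13 : ∀ a b c, T a b c = T c b a := by
    intro a b c
    rw [hT23, hT12, hT23]
  -- second order condition
  have hsec : ∀ v : Fin N → ℝ,
      ∑ i, (2 * ((∑ k, v k * hess u x₀ k i) * (∑ k, v k * hess u x₀ k i))
        + 2 * (g i * ∑ k, v k * ∑ a, v a * T a k i)) ≤ 0 := by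
    intro v
    have hQ1 : HasDerivAt
        (fun t : ℝ => ∑ i, 2 * grad u (x₀ + t • v) i * ∑ k, v k * hess u (x₀ + t • v) k i)
        (∑ i, (2 * (∑ k, v k * hess u x₀ k i) * (∑ k, v k * hess u x₀ k i)
          + 2 * grad u x₀ i * ∑ k, v k * ∑ a, v a * T a k i)) 0 := by
      apply HasDerivAt.fun_sum
      intro i _
      have hA : HasDerivAt (fun t : ℝ => 2 * grad u (x₀ + t • v) i)
          (2 * ∑ k, v k * hess u x₀ k i) 0 := by
        have := (hlineφ i x₀ v 0).const_mul (2:ℝ)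
        rwa [h0 v] at this
      have hB : HasDerivAt (fun t : ℝ => ∑ k, v k * hess u (x₀ + t • v) k i)
          (∑ k, v k * ∑ a, v a * T a k i) 0 := by
        apply HasDerivAt.fun_sum
        intro k _
        have := (hlineψ k i x₀ v 0).const_mul (v k)
        rw [h0 v] at this
        exact this
      have := hA.fun_mul hB
      rw [h0 v] at this
      convert this using 1
    have hmax' : ∀ t : ℝ, gradSq u (x₀ + t • v) ≤ gradSq u (x₀ + (0:ℝ) • v) := by
      intro t; rw [h0 v]; exact hmax _
    have := second_deriv_nonpos_at_max (hq v) hQ1 hmax'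
    calc ∑ i, (2 * ((∑ k, v k * hess u x₀ k i) * (∑ k, v k * hess u x₀ k i))
        + 2 * (g i * ∑ k, v k * ∑ a, v a * T a k i))
        = ∑ i, (2 * (∑ k, v k * hess u x₀ k i) * (∑ k, v k * hess u x₀ k i)
          + 2 * grad u x₀ i * ∑ k, v k * ∑ a, v a * T a k i) := by
          apply Finset.sum_congr rfl; intro i _; rw [hg]; ring_nf
      _ ≤ 0 := this
  -- quadratic form version
  have hform : ∀ v : Fin N → ℝ,
      ∑ k, ∑ a, v k * ((∑ i, hess u x₀ k i * hess u x₀ a i) + (∑ i, g i * T a k i)) * v a ≤ 0 := by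
    intro v
    have hA : ∑ k, ∑ a, ∑ i, v k * (hess u x₀ k i * hess u x₀ a i) * v a
        = ∑ i, (∑ k, v k * hess u x₀ k i) * (∑ k, v k * hess u x₀ k i) := by
      rw [← sum_rotate (fun i k a => v k * (hess u x₀ k i * hess u x₀ a i) * v a)]
      apply Finset.sum_congr rfl; intro i _
      rw [Finset.sum_mul_sum]
      apply Finset.sum_congr rfl; intro k _
      apply Finset.sum_congr rfl; intro a _
      ring
    have hB : ∑ k, ∑ a, ∑ i, v k * (g i * T a k i) * v a
        = ∑ i, g i * ∑ k, v k * ∑ a, v a * T a k i := by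
      rw [← sum_rotate (fun i k a => v k * (g i * T a k i) * v a)]
      apply Finset.sum_congr rfl; intro i _
      have inner : ∀ k, g i * (v k * ∑ a, v a * T a k i)
          = ∑ a, v k * (g i * T a k i) * v a := by
        intro k
        rw [Finset.mul_sum, Finset.mul_sum]
        apply Finset.sum_congr rfl; intro a _
        ring
      rw [Finset.mul_sum]
      apply Finset.sum_congr rfl; intro k _
      exact (inner k).symm
    have hsplit : ∑ k, ∑ a, v k * ((∑ i, hess u x₀ k i * hess u x₀ a i)
        + (∑ i, g i * T a k i)) * v a
        = (∑ k, ∑ a, ∑ i, v k * (hess u x₀ k i * hess u x₀ a i) * v a)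
          + (∑ k, ∑ a, ∑ i, v k * (g i * T a k i) * v a) := by
      rw [← Finset.sum_add_distrib]
      apply Finset.sum_congr rfl; intro k _
      rw [← Finset.sum_add_distrib]
      apply Finset.sum_congr rfl; intro a _
      rw [mul_add, add_mul, Finset.mul_sum, Finset.mul_sum, Finset.sum_mul, Finset.sum_mul]
    have hsum : ∑ i, (2 * ((∑ k, v k * hess u x₀ k i) * (∑ k, v k * hess u x₀ k i))
        + 2 * (g i * ∑ k, v k * ∑ a, v a * T a k i))
        = 2 * (∑ i, (∑ k, v k * hess u x₀ k i) * (∑ k, v k * hess u x₀ k i))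
          + 2 * (∑ i, g i * ∑ k, v k * ∑ a, v a * T a k i) := by
      rw [Finset.sum_add_distrib, Finset.mul_sum, Finset.mul_sum]
    have h := hsec v
    rw [hsum] at h
    rw [hsplit, hA, hB]
    linarith
  -- entries of amat
  have hamat : ∀ (x : Fin N → ℝ) (i j : Fin N), amat u x i j
      = (if i = j then (1:ℝ) else 0) + grad u x i * grad u x j - hess u x i j := by
    intro x i j
    simp [amat, Matrix.sub_apply, Matrix.add_apply, Matrix.one_apply, Matrix.of_apply]
  -- derivative of entries along g at the critical point
  have hent : ∀ i j : Fin N, HasDerivAt (fun s : ℝ => amat u (x₀ + s • g) i j)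
      (-(∑ k, g k * T k i j)) 0 := by
    intro i j
    have hm := ((hlineφ i x₀ g 0).mul (hlineφ j x₀ g 0)).const_add (if i = j then (1:ℝ) else 0)
    have hmm := hm.sub (hlineψ i j x₀ g 0)
    rw [h0 g] at hmm
    rw [hs i, hs j] at hmm
    simp only [zero_mul, mul_zero, add_zero, zero_add] at hmm
    have h2 : (fun s : ℝ => (if i = j then (1:ℝ) else 0)
        + grad u (x₀ + s • g) i * grad u (x₀ + s • g) j - hess u (x₀ + s • g) i j)
        = fun s : ℝ => amat u (x₀ + s • g) i j := by
      funext s; rw [hamat]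
    replace hmm : HasDerivAt (fun s : ℝ => (if i = j then (1:ℝ) else 0)
        + grad u (x₀ + s • g) i * grad u (x₀ + s • g) j - hess u (x₀ + s • g) i j) _ 0 := hmm
    rw [h2] at hmm
    convert hmm using 1
    simp only [hT]
    ring
  have hdet : HasDerivAt (fun s : ℝ => (amat u (x₀ + s • g)).det)
      (∑ i, ∑ j, (amat u x₀).adjugate i j * (-(∑ k, g k * T k j i))) 0 := by
    have h1 := det_hasDerivAt (M := fun s : ℝ => amat u (x₀ + s • g))
      (M' := Matrix.of fun i j => -(∑ k, g k * T k i j)) (t := 0)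
      (fun i j => hent i j)
    simp only [h0 g, Matrix.of_apply] at h1
    convert h1 using 1
  have hw0 : (0:ℝ) ≤ gradSq u x₀ := Finset.sum_nonneg (fun i _ => sq_nonneg _)
  have hqg : HasDerivAt (fun s : ℝ => 1 + gradSq u (x₀ + s • g)) 0 0 := by
    have h1 := (hq g 0).const_add 1
    rw [h0 g] at h1
    have h2 : ∑ i, 2 * grad u x₀ i * ∑ k, g k * hess u x₀ k i = 0 := by
      have := hfo g
      simpa only [hg] using this
    rw [h2] at h1
    exact h1
  have hGd : HasDerivAt (fun s : ℝ => (1 + gradSq u (x₀ + s • g)) ^ p) 0 0 := by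
    have h1 := hqg.rpow_const (p := p) (Or.inr hp.le)
    simpa using h1
  have hfeq : (fun s : ℝ => (amat u (x₀ + s • g)).det)
      = (fun s : ℝ => (1 + gradSq u (x₀ + s • g)) ^ p) := funext fun s => heq _
  have hzero : ∑ i, ∑ j, (amat u x₀).adjugate i j * (-(∑ k, g k * T k j i)) = 0 := by
    have h1 := hdet
    rw [hfeq] at h1
    exact h1.unique hGd
  have htrace : ∑ i, ∑ j, (amat u x₀).adjugate i j * (∑ k, g k * T i j k) = 0 := by
    have h1 : ∑ i, ∑ j, (amat u x₀).adjugate i j * (∑ k, g k * T k j i)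
        = -∑ i, ∑ j, (amat u x₀).adjugate i j * (-(∑ k, g k * T k j i)) := by
      rw [← Finset.sum_neg_distrib]
      apply Finset.sum_congr rfl; intro i _
      rw [← Finset.sum_neg_distrib]
      apply Finset.sum_congr rfl; intro j _
      ring
    have h2 : ∀ i j : Fin N, (∑ k, g k * T k j i) = ∑ k, g k * T i j k := by
      intro i j
      apply Finset.sum_congr rfl; intro k _
      rw [hT13 k j i]
    calc ∑ i, ∑ j, (amat u x₀).adjugate i j * (∑ k, g k * T i j k)
        = ∑ i, ∑ j, (amat u x₀).adjugate i j * (∑ k, g k * T k j i) := by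
          apply Finset.sum_congr rfl; intro i _
          apply Finset.sum_congr rfl; intro j _
          rw [h2 i j]
      _ = -∑ i, ∑ j, (amat u x₀).adjugate i j * (-(∑ k, g k * T k j i)) := h1
      _ = 0 := by rw [hzero, neg_zero]
  -- positive definiteness of the adjugate's quadratic form
  set B : Matrix (Fin N) (Fin N) ℝ := (amat u x₀).adjugate with hB
  have hApd : (amat u x₀).PosDef := hadm x₀
  have hdetpos : 0 < (amat u x₀).det := hApd.det_pos
  have hBeq : B = (amat u x₀).det • (amat u x₀)⁻¹ := by
    rw [hB, Matrix.inv_def, smul_smul, Ring.inverse_eq_inv, mul_inv_cancel₀ hdetpos.ne', one_smul]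
  have hBpos : ∀ z : Fin N → ℝ, z ≠ 0 → 0 < z ⬝ᵥ (B *ᵥ z) := by
    intro z hz
    have h1 := (hApd.inv).dotProduct_mulVec_pos hz
    rw [star_trivial] at h1
    rw [hBeq, Matrix.smul_mulVec, dotProduct_smul, smul_eq_mul]
    exact mul_pos hdetpos h1
  have hBnn : ∀ z : Fin N → ℝ, 0 ≤ z ⬝ᵥ (B *ᵥ z) := by
    intro z
    rcases eq_or_ne z 0 with rfl | hz
    · simp
    · exact (hBpos z hz).le
  -- the matrix C with nonpositive quadratic form
  set C : Matrix (Fin N) (Fin N) ℝ := Matrix.of (fun k a =>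
    (∑ i, hess u x₀ k i * hess u x₀ a i) + (∑ i, g i * T a k i)) with hC
  have hCapp : ∀ k a, C k a
      = (∑ i, hess u x₀ k i * hess u x₀ a i) + (∑ i, g i * T a k i) := fun k a => rfl
  have hCform : ∀ z : Fin N → ℝ, z ⬝ᵥ (C *ᵥ z) ≤ 0 := by
    intro z
    have h := hform z
    have e : z ⬝ᵥ (C *ᵥ z) = ∑ k, ∑ a, z k * ((∑ i, hess u x₀ k i * hess u x₀ a i)
        + (∑ i, g i * T a k i)) * z a := by
      simp only [dotProduct, Matrix.mulVec]
      apply Finset.sum_congr rfl; intro k _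
      rw [Finset.mul_sum]
      apply Finset.sum_congr rfl; intro a _
      rw [hCapp]
      ring
    rw [e]
    exact h
  have hCsym : ∀ k a, C k a = C a k := by
    intro k a
    rw [hCapp, hCapp]
    congr 1
    · apply Finset.sum_congr rfl; intro i _; ring
    · apply Finset.sum_congr rfl; intro i _; rw [hT12 a k i]
  have hnegC : (-C).PosSemidef := by
    rw [Matrix.posSemidef_iff_dotProduct_mulVec]
    constructor
    · show (-C)ᴴ = -C
      ext i j
      simp only [Matrix.conjTranspose_apply, Matrix.neg_apply, star_trivial]
      rw [hCsym j i]
    · intro z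
      rw [star_trivial, Matrix.neg_mulVec, dotProduct_neg]
      have := hCform z
      linarith
  obtain ⟨D, hD⟩ : ∃ D : Matrix (Fin N) (Fin N) ℝ, -C = Dᴴ * D := by
    open scoped MatrixOrder in
    obtain ⟨D, hD⟩ := CStarAlgebra.nonneg_iff_eq_star_mul_self.mp hnegC.nonneg
    exact ⟨D, hD⟩
  -- trace inequalities
  have hKey1 : ∑ i, ∑ j, B i j * ((-C) j i)
      = ∑ m, (fun k => D m k) ⬝ᵥ (B *ᵥ (fun k => D m k)) := by
    have e : ∀ j i : Fin N, (-C) j i = ∑ m, D m j * D m i := by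
      intro j i
      rw [hD]
      simp only [Matrix.mul_apply, Matrix.conjTranspose_apply, star_trivial]
    calc ∑ i, ∑ j, B i j * ((-C) j i)
        = ∑ i, ∑ j, B i j * (∑ m, D m j * D m i) := by
          apply Finset.sum_congr rfl; intro i _
          apply Finset.sum_congr rfl; intro j _
          rw [e j i]
      _ = ∑ m, (fun k => D m k) ⬝ᵥ (B *ᵥ (fun k => D m k)) :=
          trace_form B (fun k m => D m k)
  have hKey1' : 0 ≤ ∑ i, ∑ j, B i j * ((-C) j i) := by
    rw [hKey1]
    exact Finset.sum_nonneg (fun m _ => hBnn _)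
  -- split C into the square part and the third-derivative part
  have hsplitC : ∑ i, ∑ j, B i j * (C j i)
      = (∑ i, ∑ j, B i j * (∑ m, hess u x₀ j m * hess u x₀ i m))
        + ∑ i, ∑ j, B i j * (∑ k, g k * T i j k) := by
    rw [← Finset.sum_add_distrib]
    apply Finset.sum_congr rfl; intro i _
    rw [← Finset.sum_add_distrib]
    apply Finset.sum_congr rfl; intro j _
    rw [hCapp, mul_add]
  have hPterm : ∑ i, ∑ j, B i j * (∑ m, hess u x₀ j m * hess u x₀ i m)
      = ∑ m, (fun k => hess u x₀ k m) ⬝ᵥ (B *ᵥ (fun k => hess u x₀ k m)) :=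
    trace_form B (fun k m => hess u x₀ k m)
  have hneg : ∑ i, ∑ j, B i j * ((-C) j i) = -∑ i, ∑ j, B i j * (C j i) := by
    rw [← Finset.sum_neg_distrib]
    apply Finset.sum_congr rfl; intro i _
    rw [← Finset.sum_neg_distrib]
    apply Finset.sum_congr rfl; intro j _
    simp only [Matrix.neg_apply]
    ring
  have hPle : ∑ m, (fun k => hess u x₀ k m) ⬝ᵥ (B *ᵥ (fun k => hess u x₀ k m)) ≤ 0 := by
    have h1 := hKey1'
    rw [hneg, hsplitC, hPterm, htrace] at h1
    linarith
  have hPz : ∀ m, (fun k => hess u x₀ k m) ⬝ᵥ (B *ᵥ (fun k => hess u x₀ k m)) = 0 := by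
    intro m
    have hle := hPle
    have hnn : ∀ m ∈ Finset.univ, (0:ℝ) ≤ (fun k => hess u x₀ k m) ⬝ᵥ (B *ᵥ (fun k => hess u x₀ k m)) :=
      fun m _ => hBnn _
    have hz : ∑ m, (fun k => hess u x₀ k m) ⬝ᵥ (B *ᵥ (fun k => hess u x₀ k m)) = 0 :=
      le_antisymm hle (Finset.sum_nonneg hnn)
    exact (Finset.sum_eq_zero_iff_of_nonneg hnn).mp hz m (Finset.mem_univ m)
  -- hence the Hessian vanishes at x₀
  have hhess0 : ∀ k m, hess u x₀ k m = 0 := by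
    intro k m
    by_contra hne
    have hvec : (fun k => hess u x₀ k m) ≠ 0 := by
      intro hcon
      exact hne (congrFun hcon k)
    exact absurd (hPz m) (ne_of_gt (hBpos _ hvec))
  -- det at x₀ equals 1 + gradSq
  have hdetx : (amat u x₀).det = 1 + gradSq u x₀ := by
    have hA0 : amat u x₀ = 1 + Matrix.replicateCol Unit g * Matrix.replicateRow Unit g := by
      ext i j
      rw [hamat]
      simp only [Matrix.add_apply, Matrix.one_apply, Matrix.mul_apply, Matrix.replicateCol_apply,
        Matrix.replicateRow_apply, Finset.univ_unique, Finset.sum_singleton]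
      rw [hhess0 i j, hg]
      ring
    rw [hA0, Matrix.det_one_add_replicateCol_mul_replicateRow g g]
    congr 1
    simp only [dotProduct, gradSq, hg]
    apply Finset.sum_congr rfl; intro i _
    ring
  have hkey : 1 + gradSq u x₀ = (1 + gradSq u x₀) ^ p := by
    have h := heq x₀
    rwa [hdetx] at h
  have hwzero : gradSq u x₀ = 0 := by
    by_contra hne
    have hgt : (1:ℝ) < 1 + gradSq u x₀ := by
      have : 0 < gradSq u x₀ := lt_of_le_of_ne hw0 (Ne.symm hne)
      linarith
    have h1 : (1 + gradSq u x₀) ^ (1:ℝ) < (1 + gradSq u x₀) ^ p :=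
      (Real.rpow_lt_rpow_left_iff hgt).mpr hp
    rw [Real.rpow_one, ← hkey] at h1
    exact lt_irrefl _ h1
  have hall : ∀ x i, grad u x i = 0 := by
    intro x i
    have h1 : gradSq u x ≤ 0 := by
      have := hmax x
      rwa [hwzero] at this
    have h2 : gradSq u x = 0 :=
      le_antisymm h1 (Finset.sum_nonneg (fun i _ => sq_nonneg _))
    have h3 := (Finset.sum_eq_zero_iff_of_nonneg
      (fun i (_ : i ∈ Finset.univ) => sq_nonneg (grad u x i))).mp h2 i (Finset.mem_univ i)
    exact pow_eq_zero_iff (n := 2) (by norm_num) |>.mp h3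
  have hfz : ∀ x, fderiv ℝ u x = 0 := by
    intro x
    apply ContinuousLinearMap.ext
    intro v
    rw [clm_apply_eq_sum]
    have : ∀ i : Fin N, v i * fderiv ℝ u x (Pi.single i 1) = 0 := by
      intro i
      have := hall x i
      rw [grad] at this
      rw [this, mul_zero]
    rw [Finset.sum_congr rfl (fun i _ => this i)]
    simp
  exact fun x y => is_const_of_fderiv_eq_zero hud hfz x y
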